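/- Let B₃ be the braid group on three strands, presented with generators s, t and relation s·t·s = t·s·t, let 𝒯(a₁,…,aₙ) = s^{a₁}·t^{−a₂}·s^{a₃}·⋯ ∈ B₃, and let E = 𝒯(1,−1,1) = s·t·s. Then for all integers b and m, the identity 𝒯(−2)·𝒯(b)·E^{2m+1}·𝒯(2) = 𝒯(b−2,−2)·E^{2m+1} holds in B₃. -/
import Mathlib


/-- The single braid relation `s·t·s = t·s·t` for the braid group on three strands,
written as a relator in the free group on two generators. -/
def braidRels : Set (FreeGroup (Fin 2)) :=
  { FreeGroup.of 0 * FreeGroup.of 1 * FreeGroup.of 0 *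
    (FreeGroup.of 1 * FreeGroup.of 0 * FreeGroup.of 1)⁻¹ }

/-- The braid group on three strands, presented with generators `s`, `t`
and the single relation `s·t·s = t·s·t`. -/
abbrev B3 : Type := PresentedGroup braidRels

/-- The first generator `s` of `B₃`. -/
def s : B3 := PresentedGroup.of 0

/-- The second generator `t` of `B₃`. -/
def t : B3 := PresentedGroup.of 1

/-- The half-twist `Δ = s·t·s` (the 3-braid `E = 𝒯(1,−1,1)`). -/
def Δ : B3 := s * t * s

/-- Auxiliary function building `𝒯(a₁,…,aₙ)`: when the flag is `true` the next
entry is a power of `s` (horizontal twists on the top two strands), when `false`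
it is an inverse power of `t`. -/
def Tgo : Bool → List ℤ → B3
  | _, [] => 1
  | true, a :: l => s ^ a * Tgo false l
  | false, a :: l => t ^ (-a) * Tgo true l

/-- The 3-braid `𝒯(a₁,…,aₙ) = s^{a₁} · t^{−a₂} · s^{a₃} · t^{−a₄} · ⋯` in `B₃`. -/
def T (l : List ℤ) : B3 := Tgo true l

/-- The special 3-braid `E = 𝒯(1,−1,1) = s·t·s`. -/
def E : B3 := T [1, -1, 1]

lemma braid_rel : s * t * s = t * s * t := by
  have h : (FreeGroup.of 0 * FreeGroup.of 1 * FreeGroup.of 0 *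
      (FreeGroup.of 1 * FreeGroup.of 0 * FreeGroup.of 1)⁻¹ : FreeGroup (Fin 2)) ∈
      Subgroup.normalClosure braidRels :=
    Subgroup.subset_normalClosure rfl
  have h1 : (QuotientGroup.mk (FreeGroup.of 0 * FreeGroup.of 1 * FreeGroup.of 0 *
      (FreeGroup.of 1 * FreeGroup.of 0 * FreeGroup.of 1)⁻¹) : B3) = 1 :=
    (QuotientGroup.eq_one_iff _).mpr h
  have h2 : s * t * s * (t * s * t)⁻¹ = 1 := by
    rw [show (s * t * s * (t * s * t)⁻¹ : B3)
        = QuotientGroup.mk (FreeGroup.of 0 * FreeGroup.of 1 * FreeGroup.of 0 *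
        (FreeGroup.of 1 * FreeGroup.of 0 * FreeGroup.of 1)⁻¹) from rfl]
    exact h1
  exact mul_inv_eq_one.mp h2

lemma delta_alt : Δ = t * s * t := by rw [Δ, braid_rel]

lemma ds : Δ * s = t * Δ := by
  show (s * t * s) * s = t * (s * t * s)
  nth_rewrite 1 [braid_rel]
  group

lemma dt : Δ * t = s * Δ := by
  show (s * t * s) * t = s * (s * t * s)
  calc s * t * s * t = s * (t * s * t) := by group
    _ = s * (s * t * s) := by rw [← braid_rel]

lemma d2t : Δ * Δ * t = t * (Δ * Δ) := by
  calc Δ * Δ * t = Δ * (Δ * t) := by group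
    _ = Δ * (s * Δ) := by rw [dt]
    _ = (Δ * s) * Δ := by group
    _ = (t * Δ) * Δ := by rw [ds]
    _ = t * (Δ * Δ) := by group

lemma E_eq : E = Δ := by
  simp [E, T, Tgo, Δ, mul_assoc]

/-- Case 1, Subcase 1 of the proof of Theorem 3.8: for all integers `b` and `m`,
`𝒯(−2)·𝒯(b)·E^{2m+1}·𝒯(2) = 𝒯(b−2,−2)·E^{2m+1}` in `B₃`. -/
theorem gamma2_case1_subcase1 (b m : ℤ) :
    T [-2] * T [b] * E ^ (2 * m + 1) * T [2] = T [b - 2, -2] * E ^ (2 * m + 1) := by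
  have hd2 : Δ ^ (2 : ℤ) = Δ * Δ := zpow_two Δ
  have hct : Commute ((Δ ^ (2 : ℤ)) ^ m) t := by
    have : Commute (Δ ^ (2 : ℤ)) t := by rw [hd2]; exact d2t
    exact this.zpow_left m
  have hsplit : Δ ^ (2 * m + 1) = (Δ ^ (2 : ℤ)) ^ m * Δ := by
    rw [zpow_add, zpow_one, zpow_mul]
  have key : E ^ (2 * m + 1) * s ^ (2 : ℤ) = t ^ (-(-2) : ℤ) * E ^ (2 * m + 1) := by
    rw [E_eq, hsplit, show ((-(-2) : ℤ)) = 2 from rfl, zpow_two, zpow_two]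
    calc (Δ ^ (2 : ℤ)) ^ m * Δ * (s * s)
        = (Δ ^ (2 : ℤ)) ^ m * ((Δ * s) * s) := by group
      _ = (Δ ^ (2 : ℤ)) ^ m * ((t * Δ) * s) := by rw [ds]
      _ = (Δ ^ (2 : ℤ)) ^ m * (t * (Δ * s)) := by group
      _ = (Δ ^ (2 : ℤ)) ^ m * (t * (t * Δ)) := by rw [ds]
      _ = ((Δ ^ (2 : ℤ)) ^ m * t) * (t * Δ) := by group
      _ = (t * (Δ ^ (2 : ℤ)) ^ m) * (t * Δ) := by rw [hct.eq]
      _ = t * (((Δ ^ (2 : ℤ)) ^ m * t) * Δ) := by group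
      _ = t * ((t * (Δ ^ (2 : ℤ)) ^ m) * Δ) := by rw [hct.eq]
      _ = t * t * ((Δ ^ (2 : ℤ)) ^ m * Δ) := by group
  simp only [T, Tgo, mul_one]
  calc s ^ (-2 : ℤ) * s ^ b * E ^ (2 * m + 1) * s ^ (2 : ℤ)
      = s ^ (-2 : ℤ) * s ^ b * (E ^ (2 * m + 1) * s ^ (2 : ℤ)) := by group
    _ = s ^ (-2 : ℤ) * s ^ b * (t ^ (-(-2) : ℤ) * E ^ (2 * m + 1)) := by rw [key]
    _ = (s ^ (-2 : ℤ) * s ^ b) * t ^ (-(-2) : ℤ) * E ^ (2 * m + 1) := by group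
    _ = s ^ (b - 2) * t ^ (-(-2) : ℤ) * E ^ (2 * m + 1) := by
        rw [← zpow_add, show (-2 + b : ℤ) = b - 2 from by ring]
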